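/- Let $\Delta(x) = -\frac{\eta}{l}\nabla\mathcal{L}^l_{\bar\gamma}(x)$ be a single SVAG step. Then $\mathbb{E}\,\Delta(x)\Delta(x)^\top = \frac{\eta^2}{l}\Sigma(x) + \frac{\eta^2}{l^2}\nabla\mathcal{L}(x)\nabla\mathcal{L}(x)^\top$, where $\Sigma(x)$ is the covariance of $\nabla\mathcal{L}_\gamma(x)$. -/

import Mathlib

open MeasureTheory

lemma l2_integrable_mul {Ω : Type*} [MeasurableSpace Ω] {μ : Measure Ω} {f g : Ω → ℝ}
    (hf : MemLp f 2 μ) (hg : MemLp g 2 μ) : Integrable (fun ω => f ω * g ω) μ := by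
  have h1 := (hf.add hg).integrable_sq
  have h2 := hf.integrable_sq
  have h3 := hg.integrable_sq
  have h := ((h1.sub h2).sub h3).div_const 2
  have heq : (fun ω => ((f ω + g ω) ^ 2 - f ω ^ 2 - g ω ^ 2) / 2)
      = fun ω => f ω * g ω := by funext ω; ring
  simpa [heq] using h

/-- for a single SVAG step `Δ(x) = -(η/l) ∇L^l_{γ̄}(x)`, the
second moment satisfies
`E[Δ(x)Δ(x)ᵀ] = (η²/l) Σ(x) + (η²/l²) ∇L(x)∇L(x)ᵀ`,
where `Σ(x)` is the covariance of `∇L_γ(x)` and `∇L(x) = E ∇L_γ(x)`,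
written entrywise. -/
theorem svag_step_second_moment {d : ℕ} {Γ Ω : Type*}
    [MeasurableSpace Ω] [MeasurableSpace Γ]
    (μ : Measure Ω) [IsProbabilityMeasure μ]
    (L : Γ → EuclideanSpace ℝ (Fin d) → ℝ)
    (gradL : Γ → EuclideanSpace ℝ (Fin d) → EuclideanSpace ℝ (Fin d))
    (hgrad : ∀ γ x, HasGradientAt (L γ) (gradL γ x) x)
    (hmeasL : ∀ x, Measurable fun γ' : Γ => gradL γ' x)
    (γ γ₁ γ₂ : Ω → Γ)
    (hmeas : Measurable γ) (hmeas1 : Measurable γ₁) (hmeas2 : Measurable γ₂)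
    (hid1 : Measure.map γ₁ μ = Measure.map γ μ)
    (hid2 : Measure.map γ₂ μ = Measure.map γ μ)
    (hindep : ProbabilityTheory.IndepFun γ₁ γ₂ μ)
    (hLp : ∀ x, ∀ p : ℕ, MemLp (fun ω => gradL (γ ω) x) p μ)
    (η : ℝ) (hη : 0 < η) (l : ℕ) (hl : 1 ≤ l)
    (x : EuclideanSpace ℝ (Fin d))
    -- the SVAG step
    (Δ : Ω → EuclideanSpace ℝ (Fin d))
    (hΔ : Δ = fun ω => (-(η / l)) •
      (((1 + Real.sqrt (2 * l - 1)) / 2) • gradL (γ₁ ω) x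
        + ((1 - Real.sqrt (2 * l - 1)) / 2) • gradL (γ₂ ω) x))
    -- the full gradient and the noise covariance
    (m : EuclideanSpace ℝ (Fin d)) (hm : m = ∫ ω, gradL (γ ω) x ∂μ)
    (S : Matrix (Fin d) (Fin d) ℝ)
    (hS : S = fun i j => ∫ ω, (gradL (γ ω) x i - m i) * (gradL (γ ω) x j - m j) ∂μ) :
    ∀ i j : Fin d,
      ∫ ω, Δ ω i * Δ ω j ∂μ
        = η ^ 2 / l * S i j + η ^ 2 / (l : ℝ) ^ 2 * (m i * m j) := by
  intro i j
  -- notation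
  set s := Real.sqrt (2 * l - 1) with hs
  have hl1 : (1 : ℝ) ≤ (l : ℝ) := by exact_mod_cast hl
  have hlne : (l : ℝ) ≠ 0 := by linarith
  have hs2 : s ^ 2 = 2 * l - 1 := Real.sq_sqrt (by linarith)
  set a : ℝ := (1 + s) / 2 with ha
  set b : ℝ := (1 - s) / 2 with hb
  -- coordinate functions
  set f : Fin d → Γ → ℝ := fun k γ' => gradL γ' x k with hf
  have hfmeas : ∀ k, Measurable (f k) := fun k =>
    (EuclideanSpace.proj (𝕜 := ℝ) k).continuous.measurable.comp (hmeasL x)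
  -- MemLp of coordinates composed with γ, γ₁, γ₂
  have hGmem2 : ∀ p : ℕ, MemLp (fun ω => gradL (γ ω) x) p μ := hLp x
  have hmemk : ∀ (p : ℕ) (k : Fin d), MemLp (fun ω => f k (γ ω)) p μ := by
    intro p k
    have := (EuclideanSpace.proj k : EuclideanSpace ℝ (Fin d) →L[ℝ] ℝ).comp_memLp' (hGmem2 p)
    exact this
  have hmemν : ∀ (p : ℕ) (k : Fin d), MemLp (f k) p (Measure.map γ μ) := by
    intro p k
    have := (memLp_map_measure_iff (μ := μ) (f := γ) (g := f k) (p := p)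
      (hfmeas k).aestronglyMeasurable hmeas.aemeasurable).mpr
    exact this (hmemk p k)
  have hmem1 : ∀ (p : ℕ) (k : Fin d), MemLp (fun ω => f k (γ₁ ω)) p μ := by
    intro p k
    have := (memLp_map_measure_iff (μ := μ) (f := γ₁) (g := f k) (p := p)
      (by rw [hid1]; exact (hfmeas k).aestronglyMeasurable) hmeas1.aemeasurable).mp
      (by rw [hid1]; exact hmemν p k)
    exact this
  have hmem2 : ∀ (p : ℕ) (k : Fin d), MemLp (fun ω => f k (γ₂ ω)) p μ := by
    intro p k
    have := (memLp_map_measure_iff (μ := μ) (f := γ₂) (g := f k) (p := p)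
      (by rw [hid2]; exact (hfmeas k).aestronglyMeasurable) hmeas2.aemeasurable).mp
      (by rw [hid2]; exact hmemν p k)
    exact this
  -- integrability of all products
  have hint11 : Integrable (fun ω => f i (γ₁ ω) * f j (γ₁ ω)) μ :=
    l2_integrable_mul (hmem1 2 i) (hmem1 2 j)
  have hint22 : Integrable (fun ω => f i (γ₂ ω) * f j (γ₂ ω)) μ :=
    l2_integrable_mul (hmem2 2 i) (hmem2 2 j)
  have hint12 : Integrable (fun ω => f i (γ₁ ω) * f j (γ₂ ω)) μ :=
    l2_integrable_mul (hmem1 2 i) (hmem2 2 j)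
  have hint21 : Integrable (fun ω => f j (γ₁ ω) * f i (γ₂ ω)) μ :=
    l2_integrable_mul (hmem1 2 j) (hmem2 2 i)
  have hintγ : ∀ k k' : Fin d, Integrable (fun ω => f k (γ ω) * f k' (γ ω)) μ :=
    fun k k' => l2_integrable_mul (hmemk 2 k) (hmemk 2 k')
  have hintk : ∀ k, Integrable (fun ω => f k (γ ω)) μ :=
    fun k => memLp_one_iff_integrable.mp (by exact_mod_cast hmemk 1 k)
  have hint1k : ∀ k, Integrable (fun ω => f k (γ₁ ω)) μ :=
    fun k => memLp_one_iff_integrable.mp (by exact_mod_cast hmem1 1 k)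
  have hint2k : ∀ k, Integrable (fun ω => f k (γ₂ ω)) μ :=
    fun k => memLp_one_iff_integrable.mp (by exact_mod_cast hmem2 1 k)
  -- m k = ∫ f k ∘ γ
  have hGint : Integrable (fun ω => gradL (γ ω) x) μ :=
    memLp_one_iff_integrable.mp (by exact_mod_cast hGmem2 1)
  have hmk : ∀ k, m k = ∫ ω, f k (γ ω) ∂μ := by
    intro k
    have := (EuclideanSpace.proj k : EuclideanSpace ℝ (Fin d) →L[ℝ] ℝ).integral_comp_comm hGint
    rw [hm]
    simpa [Function.comp] using this.symm
  -- first moments transfer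
  have hmom1 : ∀ k, ∫ ω, f k (γ₁ ω) ∂μ = m k := by
    intro k
    rw [hmk k, ← integral_map hmeas1.aemeasurable (hfmeas k).aestronglyMeasurable,
      hid1, integral_map hmeas.aemeasurable (hfmeas k).aestronglyMeasurable]
  have hmom2 : ∀ k, ∫ ω, f k (γ₂ ω) ∂μ = m k := by
    intro k
    rw [hmk k, ← integral_map hmeas2.aemeasurable (hfmeas k).aestronglyMeasurable,
      hid2, integral_map hmeas.aemeasurable (hfmeas k).aestronglyMeasurable]
  -- second moments transfer
  have hprodmeas : Measurable (fun γ' => f i γ' * f j γ') := (hfmeas i).mul (hfmeas j)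
  have hmom11 : ∫ ω, f i (γ₁ ω) * f j (γ₁ ω) ∂μ = ∫ ω, f i (γ ω) * f j (γ ω) ∂μ := by
    rw [← integral_map hmeas1.aemeasurable hprodmeas.aestronglyMeasurable, hid1,
      integral_map hmeas.aemeasurable hprodmeas.aestronglyMeasurable]
  have hmom22 : ∫ ω, f i (γ₂ ω) * f j (γ₂ ω) ∂μ = ∫ ω, f i (γ ω) * f j (γ ω) ∂μ := by
    rw [← integral_map hmeas2.aemeasurable hprodmeas.aestronglyMeasurable, hid2,
      integral_map hmeas.aemeasurable hprodmeas.aestronglyMeasurable]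
  -- cross terms via independence
  have hcross : ∀ k k' : Fin d, ∫ ω, f k (γ₁ ω) * f k' (γ₂ ω) ∂μ = m k * m k' := by
    intro k k'
    have hind : ProbabilityTheory.IndepFun (fun ω => f k (γ₁ ω)) (fun ω => f k' (γ₂ ω)) μ :=
      hindep.comp (hfmeas k) (hfmeas k')
    have := hind.integral_mul_eq_mul_integral ((hfmeas k).comp hmeas1).aestronglyMeasurable
      ((hfmeas k').comp hmeas2).aestronglyMeasurable
    calc ∫ ω, f k (γ₁ ω) * f k' (γ₂ ω) ∂μ
        = (∫ ω, f k (γ₁ ω) ∂μ) * ∫ ω, f k' (γ₂ ω) ∂μ := by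
          simpa [Pi.mul_apply] using this
      _ = m k * m k' := by rw [hmom1, hmom2]
  -- the covariance identity: ∫ f i f j = S i j + m i m j
  have hIij : ∫ ω, f i (γ ω) * f j (γ ω) ∂μ = S i j + m i * m j := by
    have hexp : ∀ ω, (f i (γ ω) - m i) * (f j (γ ω) - m j)
        = f i (γ ω) * f j (γ ω) - m j * f i (γ ω) - m i * f j (γ ω) + m i * m j := by
      intro ω; ring
    have hintS : ∫ ω, (f i (γ ω) - m i) * (f j (γ ω) - m j) ∂μ
        = (∫ ω, f i (γ ω) * f j (γ ω) ∂μ) - m j * m i - m i * m j + m i * m j := by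
      simp_rw [hexp]
      rw [integral_add (f := fun ω => f i (γ ω) * f j (γ ω) - m j * f i (γ ω)
            - m i * f j (γ ω)) (g := fun _ => m i * m j)
          (((hintγ i j).sub ((hintk i).const_mul (m j))).sub ((hintk j).const_mul (m i)))
          (integrable_const _),
        integral_sub (f := fun ω => f i (γ ω) * f j (γ ω) - m j * f i (γ ω))
          (g := fun ω => m i * f j (γ ω))
          ((hintγ i j).sub ((hintk i).const_mul (m j))) ((hintk j).const_mul (m i)),
        integral_sub (hintγ i j) ((hintk i).const_mul (m j)),
        integral_const_mul, integral_const_mul, hmk i, hmk j]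
      simp
    have hSij : S i j = ∫ ω, (f i (γ ω) - m i) * (f j (γ ω) - m j) ∂μ := by
      rw [hS]
    rw [hSij, hintS]; ring
  -- expand Δ coordinatewise
  have hΔk : ∀ (k : Fin d) (ω : Ω),
      Δ ω k = -(η / l) * (a * f k (γ₁ ω) + b * f k (γ₂ ω)) := by
    intro k ω
    rw [hΔ]
    simp [PiLp.smul_apply, PiLp.add_apply, smul_eq_mul, a, b, f]; ring
  have hexpand : ∀ ω, Δ ω i * Δ ω j
      = (η / l) ^ 2 * ((a * a) * (f i (γ₁ ω) * f j (γ₁ ω))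
          + (a * b) * (f i (γ₁ ω) * f j (γ₂ ω))
          + (a * b) * (f j (γ₁ ω) * f i (γ₂ ω))
          + (b * b) * (f i (γ₂ ω) * f j (γ₂ ω))) := by
    intro ω; rw [hΔk i ω, hΔk j ω]; ring
  -- compute the integral
  have hintsum :
      ∫ ω, Δ ω i * Δ ω j ∂μ
        = (η / l) ^ 2 * ((a * a) * (∫ ω, f i (γ₁ ω) * f j (γ₁ ω) ∂μ)
            + (a * b) * (∫ ω, f i (γ₁ ω) * f j (γ₂ ω) ∂μ)
            + (a * b) * (∫ ω, f j (γ₁ ω) * f i (γ₂ ω) ∂μ)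
            + (b * b) * (∫ ω, f i (γ₂ ω) * f j (γ₂ ω) ∂μ)) := by
    simp_rw [hexpand]
    rw [integral_const_mul,
      integral_add (f := fun ω => a * a * (f i (γ₁ ω) * f j (γ₁ ω))
          + a * b * (f i (γ₁ ω) * f j (γ₂ ω)) + a * b * (f j (γ₁ ω) * f i (γ₂ ω)))
        (g := fun ω => b * b * (f i (γ₂ ω) * f j (γ₂ ω)))
        (((hint11.const_mul _).add (hint12.const_mul _)).add (hint21.const_mul _))
        (hint22.const_mul _),
      integral_add (f := fun ω => a * a * (f i (γ₁ ω) * f j (γ₁ ω))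
          + a * b * (f i (γ₁ ω) * f j (γ₂ ω)))
        (g := fun ω => a * b * (f j (γ₁ ω) * f i (γ₂ ω)))
        ((hint11.const_mul _).add (hint12.const_mul _)) (hint21.const_mul _),
      integral_add (hint11.const_mul _) (hint12.const_mul _),
      integral_const_mul, integral_const_mul, integral_const_mul, integral_const_mul]
  have h2ab : 2 * (a * b) = 1 - (l : ℝ) := by
    rw [ha, hb]
    have h : 2 * ((1 + s) / 2 * ((1 - s) / 2)) = (1 - s ^ 2) / 2 := by ring
    rw [h, hs2]; ring
  have hab : a * a + b * b = (l : ℝ) := by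
    have h : a * a + b * b = (1 + s ^ 2) / 2 := by rw [ha, hb]; ring
    rw [h, hs2]; ring
  have key : ∫ ω, Δ ω i * Δ ω j ∂μ
      = (η / l) ^ 2 * ((a * a + b * b) * (S i j + m i * m j)
          + 2 * (a * b) * (m i * m j)) := by
    rw [hintsum, hmom11, hmom22, hIij, hcross i j, hcross j i]; ring
  rw [key, hab, h2ab]
  field_simp
  ring
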